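/- The series Ψ(a,z) = ₁φ₁(a; 0; q², z) satisfies the three-term relation in a: (1−a)(z/q²)(Ψ(q²a,z) − Ψ(a,z)) − (az/q²)Ψ(a,z) + (Ψ(a/q²,z) − Ψ(a,z)) = 0. -/

import Mathlib

open scoped BigOperators

/-- The q-Pochhammer symbol (a;q)_n. -/
noncomputable def qPoch (a q : ℂ) (n : ℕ) : ℂ :=
  ∏ k ∈ Finset.range n, (1 - a * q ^ k)

/-- Ψ(a,z) = ₁φ₁(a; 0; q², z). -/
noncomputable def psi11 (q a z : ℂ) : ℂ :=
  ∑' n : ℕ, qPoch a (q ^ 2) n / qPoch (q ^ 2) (q ^ 2) n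
    * (-1) ^ n * q ^ (n * (n - 1)) * z ^ n

namespace Psi11Aux

/-- The general term of the series Ψ. -/
noncomputable def gterm (q a z : ℂ) (n : ℕ) : ℂ :=
  qPoch a (q ^ 2) n / qPoch (q ^ 2) (q ^ 2) n * (-1) ^ n * q ^ (n * (n - 1)) * z ^ n

lemma psi11_eq_tsum (q a z : ℂ) : psi11 q a z = ∑' n, gterm q a z n := rfl

lemma qPoch_succ (a q : ℂ) (n : ℕ) :
    qPoch a q (n + 1) = qPoch a q n * (1 - a * q ^ n) :=
  Finset.prod_range_succ _ _

lemma qPoch_succ' (a q : ℂ) (n : ℕ) :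
    qPoch a q (n + 1) = (1 - a) * qPoch (a * q) q n := by
  rw [qPoch, Finset.prod_range_succ']
  simp only [pow_zero, mul_one]
  rw [mul_comm]
  congr 1
  refine Finset.prod_congr rfl fun k _ => ?_
  rw [pow_succ]
  ring_nf

lemma qPoch_shift (a q : ℂ) (n : ℕ) :
    (1 - a) * qPoch (a * q) q n = qPoch a q n * (1 - a * q ^ n) := by
  rw [← qPoch_succ', qPoch_succ]

lemma hD (q : ℂ) (hq : ‖q‖ < 1) (n : ℕ) : qPoch (q ^ 2) (q ^ 2) n ≠ 0 := by
  rw [qPoch]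
  refine Finset.prod_ne_zero_iff.mpr fun k _ => ?_
  intro h
  have h1 : q ^ 2 * (q ^ 2) ^ k = 1 := by linear_combination -h
  have : ‖q ^ 2 * (q ^ 2) ^ k‖ < 1 := by
    rw [norm_mul, norm_pow, norm_pow, norm_pow]
    calc ‖q‖ ^ 2 * (‖q‖ ^ 2) ^ k ≤ ‖q‖ ^ 2 * 1 := by
          refine mul_le_mul_of_nonneg_left ?_ (by positivity)
          exact pow_le_one₀ (by positivity) (pow_le_one₀ (norm_nonneg q) hq.le)
      _ = ‖q‖ ^ 2 := mul_one _
      _ < 1 := by nlinarith [norm_nonneg q]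
  rw [h1] at this
  simp at this

lemma factor_ne (q : ℂ) (hq : ‖q‖ < 1) (n : ℕ) : (1 - q ^ 2 * (q ^ 2) ^ n) ≠ 0 := by
  have := hD q hq (n + 1)
  rw [qPoch_succ] at this
  exact fun h => this (by rw [h, mul_zero])

lemma qPoch_norm_le (a q : ℂ) (hq : ‖q‖ < 1) (n : ℕ) :
    ‖qPoch a (q ^ 2) n‖ ≤ (1 + ‖a‖) ^ n := by
  induction n with
  | zero => simp [qPoch]
  | succ n ih =>
    rw [qPoch_succ, norm_mul, pow_succ (1 + ‖a‖) n]
    refine mul_le_mul ih ?_ (norm_nonneg (1 - a * (q ^ 2) ^ n)) (by positivity)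
    calc ‖1 - a * (q ^ 2) ^ n‖ ≤ ‖(1:ℂ)‖ + ‖a * (q ^ 2) ^ n‖ := norm_sub_le _ _
      _ = 1 + ‖a‖ * (‖q‖ ^ 2) ^ n := by
          rw [norm_one, norm_mul, norm_pow, norm_pow]
      _ ≤ 1 + ‖a‖ * 1 := by
          refine add_le_add_right (mul_le_mul_of_nonneg_left ?_ (norm_nonneg a)) 1
          exact pow_le_one₀ (by positivity) (pow_le_one₀ (norm_nonneg q) hq.le)
      _ = 1 + ‖a‖ := by ring

lemma qPoch_norm_ge (q : ℂ) (hq : ‖q‖ < 1) (n : ℕ) :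
    (1 - ‖q‖ ^ 2) ^ n ≤ ‖qPoch (q ^ 2) (q ^ 2) n‖ := by
  induction n with
  | zero => simp [qPoch]
  | succ n ih =>
    rw [qPoch_succ, pow_succ, norm_mul]
    have h1 : 0 ≤ 1 - ‖q‖ ^ 2 := by nlinarith [norm_nonneg q]
    refine mul_le_mul ih ?_ h1 (norm_nonneg _)
    calc 1 - ‖q‖ ^ 2 ≤ 1 - ‖q ^ 2 * (q ^ 2) ^ n‖ := by
          rw [norm_mul, norm_pow, norm_pow, norm_pow]
          have : (‖q‖ ^ 2) ^ n ≤ 1 :=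
            pow_le_one₀ (by positivity) (pow_le_one₀ (norm_nonneg q) hq.le)
          nlinarith [norm_nonneg q, sq_nonneg (‖q‖)]
      _ ≤ ‖1 - q ^ 2 * (q ^ 2) ^ n‖ := by
          calc 1 - ‖q ^ 2 * (q ^ 2) ^ n‖ = ‖(1:ℂ)‖ - ‖q ^ 2 * (q ^ 2) ^ n‖ := by rw [norm_one]
            _ ≤ ‖1 - q ^ 2 * (q ^ 2) ^ n‖ := norm_sub_norm_le _ _

lemma exp_shift (n : ℕ) : (n + 1) * n = n * (n - 1) + 2 * n := by
  cases n with
  | zero => rfl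
  | succ m => simp only [Nat.add_sub_cancel]; ring

lemma summable_majorant (c r : ℝ) (hc : 0 ≤ c) (hr0 : 0 ≤ r) (hr : r < 1) :
    Summable (fun n : ℕ => c ^ n * r ^ (n * (n - 1))) := by
  have hr2 : r ^ 2 < 1 := by nlinarith
  have ht : Filter.Tendsto (fun n : ℕ => c * (r ^ 2) ^ n) Filter.atTop (nhds (c * 0)) :=
    (tendsto_pow_atTop_nhds_zero_of_lt_one (by positivity) hr2).const_mul c
  rw [mul_zero] at ht
  have hev : ∀ᶠ n : ℕ in Filter.atTop, c * (r ^ 2) ^ n < 1 / 2 :=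
    ht.eventually (gt_mem_nhds (by norm_num))
  refine summable_of_ratio_norm_eventually_le (r := 1 / 2) (by norm_num) ?_
  filter_upwards [hev] with n hn
  have h1 : (0:ℝ) ≤ c ^ n * r ^ (n * (n - 1)) := by positivity
  have h2 : (0:ℝ) ≤ c ^ (n + 1) * r ^ ((n + 1) * ((n + 1) - 1)) := by positivity
  rw [Real.norm_of_nonneg h1, Real.norm_of_nonneg h2]
  have : c ^ (n + 1) * r ^ ((n + 1) * ((n + 1) - 1))
      = (c * (r ^ 2) ^ n) * (c ^ n * r ^ (n * (n - 1))) := by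
    rw [Nat.add_sub_cancel, exp_shift, pow_add, pow_succ, ← pow_mul]
    ring
  rw [this]
  exact mul_le_mul_of_nonneg_right hn.le h1

lemma summable_g (q a z : ℂ) (hq : ‖q‖ < 1) : Summable (gterm q a z) := by
  have hpos : (0:ℝ) < 1 - ‖q‖ ^ 2 := by nlinarith [norm_nonneg q]
  refine Summable.of_norm ?_
  refine Summable.of_nonneg_of_le (fun n => norm_nonneg _) (fun n => ?_)
    (summable_majorant ((1 + ‖a‖) / (1 - ‖q‖ ^ 2) * ‖z‖) ‖q‖ (by positivity)
      (norm_nonneg q) hq)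
  have hnorm : ‖gterm q a z n‖
      = ‖qPoch a (q ^ 2) n‖ / ‖qPoch (q ^ 2) (q ^ 2) n‖ * ‖q‖ ^ (n * (n - 1)) * ‖z‖ ^ n := by
    simp [gterm, norm_mul, norm_div, norm_pow]
  rw [hnorm]
  have h1 : ‖qPoch a (q ^ 2) n‖ / ‖qPoch (q ^ 2) (q ^ 2) n‖
      ≤ (1 + ‖a‖) ^ n / (1 - ‖q‖ ^ 2) ^ n :=
    div_le_div₀ (by positivity) (qPoch_norm_le a q hq n) (pow_pos hpos n)
      (qPoch_norm_ge q hq n)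
  calc ‖qPoch a (q ^ 2) n‖ / ‖qPoch (q ^ 2) (q ^ 2) n‖ * ‖q‖ ^ (n * (n - 1)) * ‖z‖ ^ n
      ≤ (1 + ‖a‖) ^ n / (1 - ‖q‖ ^ 2) ^ n * ‖q‖ ^ (n * (n - 1)) * ‖z‖ ^ n :=
        mul_le_mul_of_nonneg_right
          (mul_le_mul_of_nonneg_right h1 (pow_nonneg (norm_nonneg q) _))
          (pow_nonneg (norm_nonneg z) n)
    _ = ((1 + ‖a‖) / (1 - ‖q‖ ^ 2) * ‖z‖) ^ n * ‖q‖ ^ (n * (n - 1)) := by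
        rw [mul_pow, div_pow]; ring

lemma gterm_scale (q a z : ℂ) (n : ℕ) :
    gterm q a (q ^ 2 * z) n = (q ^ 2) ^ n * gterm q a z n := by
  rw [gterm, gterm, mul_pow]; ring

lemma pointA (q a z : ℂ) (hq : ‖q‖ < 1) (hq0 : q ≠ 0) (n : ℕ) :
    (1 - a) * (z / q ^ 2) * (gterm q (q ^ 2 * a) z n - gterm q a z n)
      - (a * z / q ^ 2) * gterm q a z n
      = -(a * z / q ^ 2) * gterm q a (q ^ 2 * z) n := by
  have key := qPoch_shift a (q ^ 2) n
  simp only [gterm, mul_comm (q ^ 2) a, mul_pow]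
  linear_combination (z / q ^ 2 * ((-1) ^ n * q ^ (n * (n - 1)) * z ^ n
    / qPoch (q ^ 2) (q ^ 2) n)) * key

lemma pointB (q a z : ℂ) (hq : ‖q‖ < 1) (hq0 : q ≠ 0) (n : ℕ) :
    gterm q (a / q ^ 2) z (n + 1) - gterm q a z (n + 1)
      = (a * z / q ^ 2) * gterm q a (q ^ 2 * z) n := by
  have hDn := hD q hq n
  have hN3 := factor_ne q hq n
  have e1 : qPoch (a / q ^ 2) (q ^ 2) (n + 1) = (1 - a / q ^ 2) * qPoch a (q ^ 2) n := by
    rw [qPoch_succ', div_mul_cancel₀]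
    exact pow_ne_zero 2 hq0
  have e2 := qPoch_succ a (q ^ 2) n
  have e3 := qPoch_succ (q ^ 2) (q ^ 2) n
  simp only [gterm, e1, e2, e3, Nat.add_sub_cancel, exp_shift n, pow_add,
    pow_succ (-1 : ℂ) n, pow_succ z n, pow_mul q 2 n, mul_pow (q ^ 2) z n]
  field_simp
  ring

lemma pointB0 (q a z : ℂ) : gterm q (a / q ^ 2) z 0 - gterm q a z 0 = 0 := by
  simp [gterm, qPoch]

end Psi11Aux

open Psi11Aux in
/-- Three-term relation in a for Ψ(a,z) = ₁φ₁(a;0;q²,z):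
(1−a)(z/q²)(Ψ(q²a,z) − Ψ(a,z)) − (az/q²)Ψ(a,z) + (Ψ(a/q²,z) − Ψ(a,z)) = 0. -/
theorem psi11_three_term (q a z : ℂ) (hq : ‖q‖ < 1) (hq0 : q ≠ 0) :
    (1 - a) * (z / q ^ 2) * (psi11 q (q ^ 2 * a) z - psi11 q a z)
      - (a * z / q ^ 2) * psi11 q a z
      + (psi11 q (a / q ^ 2) z - psi11 q a z) = 0 := by
  have hS1 := summable_g q a z hq
  have hS2 := summable_g q (q ^ 2 * a) z hq
  have hS3 := summable_g q (a / q ^ 2) z hq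
  have hS4 := summable_g q a (q ^ 2 * z) hq
  have E1 : (1 - a) * (z / q ^ 2) * (psi11 q (q ^ 2 * a) z - psi11 q a z)
      - (a * z / q ^ 2) * psi11 q a z
      = -(a * z / q ^ 2) * psi11 q a (q ^ 2 * z) := by
    rw [psi11_eq_tsum, psi11_eq_tsum, psi11_eq_tsum, ← Summable.tsum_sub hS2 hS1,
      ← tsum_mul_left, ← tsum_mul_left, ← tsum_mul_left,
      ← Summable.tsum_sub (((hS2.sub hS1).mul_left _)) (hS1.mul_left _)]
    exact tsum_congr fun n => pointA q a z hq hq0 n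
  have E2 : psi11 q (a / q ^ 2) z - psi11 q a z
      = (a * z / q ^ 2) * psi11 q a (q ^ 2 * z) := by
    rw [psi11_eq_tsum, psi11_eq_tsum, psi11_eq_tsum, ← Summable.tsum_sub hS3 hS1,
      Summable.tsum_eq_zero_add (hS3.sub hS1)]
    rw [pointB0, zero_add, ← tsum_mul_left]
    exact tsum_congr fun n => pointB q a z hq hq0 n
  rw [E1, E2]
  ring
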